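/- Let $(x_n)_{n\ge 0}$ be a sequence in a normed vector space $Z$. Suppose there exist a constant $\lambda \in [0,1)$ and a summable sequence of nonnegative reals $(\sigma_n)_n$ such that for all $n \ge 1$, $\|x_{n+1} - x_n\| \le \sigma_n(\|x_n\| + \|x_{n-1}\|) + \lambda \|x_n - x_{n-1}\|$. Then the series $\sum_n \|x_{n+1} - x_n\|$ converges; in particular $(x_n)_n$ is a Cauchy sequence in $Z$. -/

import Mathlib

/-- Lemma (Cauchy via perturbed contraction estimate): if `‖x (n+1) - x n‖ ≤
σ n * (‖x n‖ + ‖x (n-1)‖) + λ * ‖x n - x (n-1)‖` for all `n ≥ 1`, with `(σ n)` summable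
nonnegative and `0 ≤ λ < 1`, then `∑ ‖x (n+1) - x n‖` converges and `x` is Cauchy. -/
theorem stmt0 {Z : Type*} [NormedAddCommGroup Z] [NormedSpace ℝ Z]
    (x : ℕ → Z) (lam : ℝ) (hlam0 : 0 ≤ lam) (hlam1 : lam < 1)
    (σ : ℕ → ℝ) (hσ0 : ∀ n, 0 ≤ σ n) (hσ : Summable σ)
    (hrec : ∀ n : ℕ, 1 ≤ n →
      ‖x (n + 1) - x n‖ ≤ σ n * (‖x n‖ + ‖x (n - 1)‖) + lam * ‖x n - x (n - 1)‖) :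
    Summable (fun n => ‖x (n + 1) - x n‖) ∧ CauchySeq x := by
  set d : ℕ → ℝ := fun n => ‖x (n + 1) - x n‖ with hd
  have hd0 : ∀ n, 0 ≤ d n := fun n => norm_nonneg _
  have hd1 : ∀ m : ℕ, d (m + 1) ≤ σ (m + 1) * (‖x (m + 1)‖ + ‖x m‖) + lam * d m := by
    intro m
    have := hrec (m + 1) (by omega)
    simpa using this
  set ε : ℝ := (1 - lam) / 4 with hε
  have hεpos : 0 < ε := by rw [hε]; linarith
  -- choose N0 so that the tail sums of σ are ≤ ε
  obtain ⟨N0, hN0⟩ : ∃ N0 : ℕ, ∀ N : ℕ, ∑ i ∈ Finset.range N, σ (N0 + 1 + i) ≤ ε := by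
    have hL := hσ.hasSum.tendsto_sum_nat
    have hev : ∀ᶠ m in Filter.atTop, (∑' n, σ n) - ε < ∑ i ∈ Finset.range m, σ i :=
      hL.eventually_const_lt (by linarith)
    obtain ⟨N1, hN1⟩ := hev.exists_forall_of_atTop
    refine ⟨N1, fun N => ?_⟩
    have hsum : Summable (fun i => σ (i + (N1 + 1))) := (summable_nat_add_iff (N1 + 1)).mpr hσ
    have h1 : ∑ i ∈ Finset.range N, σ (N1 + 1 + i) ≤ ∑' i, σ (i + (N1 + 1)) := by
      have := Summable.sum_le_tsum (Finset.range N) (fun i _ => hσ0 _) hsum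
      convert this using 2 with i
      · rfl
      ring_nf
    have h2 : ∑ i ∈ Finset.range (N1 + 1), σ i + ∑' i, σ (i + (N1 + 1)) = ∑' n, σ n :=
      Summable.sum_add_tsum_nat_add (N1 + 1) hσ
    have h3 := hN1 (N1 + 1) (by omega)
    linarith
  -- bound the norms after N0
  have ha : ∀ j : ℕ, ‖x (N0 + j)‖ ≤ ‖x N0‖ + ∑ k ∈ Finset.range j, d (N0 + k) := by
    intro j
    induction j with
    | zero => simp
    | succ j ih =>
      have h1 : ‖x (N0 + (j + 1))‖ ≤ ‖x (N0 + j)‖ + d (N0 + j) := by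
        have : x (N0 + (j + 1)) = (x (N0 + j + 1) - x (N0 + j)) + x (N0 + j) := by abel
        rw [this]
        exact (norm_add_le _ _).trans_eq (add_comm _ _)
      rw [Finset.sum_range_succ]
      linarith
  set C : ℝ := ‖x N0‖ + d N0 with hC
  have hC0 : 0 ≤ C := add_nonneg (norm_nonneg _) (hd0 _)
  set B : ℝ := (2 * ε * C + lam * d N0) * 2 / (1 - lam) with hB
  have hB0 : 0 ≤ B := by
    have h1 : 0 ≤ 2 * ε * C + lam * d N0 := by positivity
    rw [hB]
    exact div_nonneg (by linarith) (by linarith)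
  -- main estimate: T N ≤ B where T N = ∑_{i<N} d (N0+1+i)
  have hT : ∀ N : ℕ, ∑ i ∈ Finset.range N, d (N0 + 1 + i) ≤ B := by
    intro N
    set T : ℝ := ∑ i ∈ Finset.range N, d (N0 + 1 + i) with hTdef
    have hT0 : 0 ≤ T := Finset.sum_nonneg fun i _ => hd0 _
    -- sum of shifted d's
    have hshift : ∑ i ∈ Finset.range N, d (N0 + i) ≤ d N0 + T := by
      have h1 : ∑ i ∈ Finset.range N, d (N0 + i) ≤ ∑ i ∈ Finset.range (N + 1), d (N0 + i) :=
        Finset.sum_le_sum_of_subset_of_nonneg (Finset.range_subset_range.mpr (by omega))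
          (fun i _ _ => hd0 _)
      have h2 : ∑ i ∈ Finset.range (N + 1), d (N0 + i)
          = ∑ i ∈ Finset.range N, d (N0 + (i + 1)) + d (N0 + 0) :=
        Finset.sum_range_succ' (fun i => d (N0 + i)) N
      have h3 : ∑ i ∈ Finset.range N, d (N0 + (i + 1)) = T := by
        apply Finset.sum_congr rfl
        intro i _
        congr 1
        omega
      rw [h2, h3] at h1
      simpa [add_comm] using h1
    -- bound on each norm appearing
    have haj : ∀ j : ℕ, j ≤ N + 1 → ‖x (N0 + j)‖ ≤ C + T := by
      intro j hj
      have h1 := ha j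
      have h2 : ∑ k ∈ Finset.range j, d (N0 + k) ≤ ∑ k ∈ Finset.range (N + 1), d (N0 + k) :=
        Finset.sum_le_sum_of_subset_of_nonneg (Finset.range_subset_range.mpr hj)
          (fun i _ _ => hd0 _)
      have h3 : ∑ i ∈ Finset.range (N + 1), d (N0 + i)
          = ∑ i ∈ Finset.range N, d (N0 + (i + 1)) + d (N0 + 0) :=
        Finset.sum_range_succ' (fun i => d (N0 + i)) N
      have h4 : ∑ i ∈ Finset.range N, d (N0 + (i + 1)) = T := by
        apply Finset.sum_congr rfl
        intro i _
        congr 1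
        omega
      rw [h3, h4] at h2
      simp only [Nat.add_zero] at h2
      rw [hC]
      linarith
    -- per-term bound and summation
    have hterm : ∀ i ∈ Finset.range N,
        d (N0 + 1 + i) ≤ σ (N0 + 1 + i) * (2 * (C + T)) + lam * d (N0 + i) := by
      intro i hi
      simp only [Finset.mem_range] at hi
      have h1 := hd1 (N0 + i)
      have e1 : N0 + i + 1 = N0 + 1 + i := by omega
      rw [e1] at h1
      have h2 : ‖x (N0 + 1 + i)‖ ≤ C + T := by
        have := haj (i + 1) (by omega)
        have e : N0 + (i + 1) = N0 + 1 + i := by omega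
        rwa [e] at this
      have h3 : ‖x (N0 + i)‖ ≤ C + T := haj i (by omega)
      have hσn := hσ0 (N0 + 1 + i)
      nlinarith
    have hsumle : T ≤ (∑ i ∈ Finset.range N, σ (N0 + 1 + i)) * (2 * (C + T))
        + lam * ∑ i ∈ Finset.range N, d (N0 + i) := by
      calc T = ∑ i ∈ Finset.range N, d (N0 + 1 + i) := hTdef
        _
          ≤ ∑ i ∈ Finset.range N, (σ (N0 + 1 + i) * (2 * (C + T)) + lam * d (N0 + i)) :=
            Finset.sum_le_sum hterm
        _ = (∑ i ∈ Finset.range N, σ (N0 + 1 + i)) * (2 * (C + T))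
            + lam * ∑ i ∈ Finset.range N, d (N0 + i) := by
            rw [Finset.sum_add_distrib, ← Finset.sum_mul, Finset.mul_sum]
    have hσsum : ∑ i ∈ Finset.range N, σ (N0 + 1 + i) ≤ ε := hN0 N
    have hσsum0 : 0 ≤ ∑ i ∈ Finset.range N, σ (N0 + 1 + i) :=
      Finset.sum_nonneg fun i _ => hσ0 _
    have key : T ≤ ε * (2 * (C + T)) + lam * (d N0 + T) := by
      have h1 : (∑ i ∈ Finset.range N, σ (N0 + 1 + i)) * (2 * (C + T))
          ≤ ε * (2 * (C + T)) := by
        apply mul_le_mul_of_nonneg_right hσsum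
        positivity
      have h2 : lam * ∑ i ∈ Finset.range N, d (N0 + i) ≤ lam * (d N0 + T) :=
        mul_le_mul_of_nonneg_left hshift hlam0
      linarith
    -- solve: (1 - lam - 2ε) T ≤ 2εC + lam d N0, with 1 - lam - 2ε = (1-lam)/2
    have h1lam : 1 - lam - 2 * ε = (1 - lam) / 2 := by rw [hε]; ring
    have hmain : (1 - lam) / 2 * T ≤ 2 * ε * C + lam * d N0 := by nlinarith
    have hpos : (0:ℝ) < 1 - lam := by linarith
    rw [hB, le_div_iff₀ hpos]
    nlinarith
  -- partial sums of d are bounded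
  have hbdd : ∀ n : ℕ, ∑ i ∈ Finset.range n, d i ≤ ∑ i ∈ Finset.range (N0 + 1), d i + B := by
    intro n
    rcases le_or_gt n (N0 + 1) with h | h
    · have : ∑ i ∈ Finset.range n, d i ≤ ∑ i ∈ Finset.range (N0 + 1), d i :=
        Finset.sum_le_sum_of_subset_of_nonneg (Finset.range_subset_range.mpr h)
          (fun i _ _ => hd0 _)
      linarith
    · obtain ⟨j, rfl⟩ : ∃ j, n = (N0 + 1) + j := ⟨n - (N0 + 1), by omega⟩
      rw [Finset.sum_range_add]
      have := hT j
      linarith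
  have hsummable : Summable d :=
    summable_of_sum_range_le hd0 hbdd
  refine ⟨hsummable, ?_⟩
  apply cauchySeq_of_summable_dist
  apply hsummable.congr
  intro n
  rw [dist_eq_norm, norm_sub_rev]
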